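/- Let I be a finite index set with a distinguished element 0, and let S be a unitary, symmetric complex matrix indexed by I whose 0-column entries S_{λ,0} are real and strictly positive. Define quantum dimensions d_λ := S_{λ,0}/S_{0,0} and Verlinde numbers N_{λ,μ}^ν := Σ_{ρ∈I} S_{λ,ρ} S_{μ,ρ} conj(S_{ν,ρ}) / S_{0,ρ}, and assume every N_{λ,μ}^ν is a non-negative real number. If Z is a matrix indexed by I with non-negative real entries such that Z_{0,0} = 1 and ZS = SZ, then each entry satisfies Z_{λ,μ} ≤ d_λ d_μ. -/

import Mathlib

open scoped ComplexConjugate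

/-- For a unitary symmetric matrix `S` with real strictly positive
`i0`-column, quantum dimensions `d λ = S λ i0 / S i0 i0` and non-negative real Verlinde
numbers `N λ μ ν = Σ_ρ S λ ρ * S μ ρ * conj (S ν ρ) / S i0 ρ`, every coupling matrix `Z`
(non-negative entries, `Z i0 i0 = 1`, `ZS = SZ`) satisfies `Z λ μ ≤ d λ * d μ`. -/
theorem coupling_matrix_entry_bound
    {I : Type*} [Fintype I] [DecidableEq I] (i0 : I)
    (S : Matrix I I ℂ) (hS : S ∈ Matrix.unitaryGroup I ℂ)
    (hsymm : S.transpose = S)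
    (hreal : ∀ lam : I, (S lam i0).im = 0)
    (hpos : ∀ lam : I, 0 < (S lam i0).re)
    (d : I → ℝ) (hd : ∀ lam : I, d lam = (S lam i0).re / (S i0 i0).re)
    (N : I → I → I → ℂ)
    (hN : ∀ lam mu nu : I,
      N lam mu nu = ∑ rho : I, S lam rho * S mu rho * conj (S nu rho) / S i0 rho)
    (hNnn : ∀ lam mu nu : I, (N lam mu nu).im = 0 ∧ 0 ≤ (N lam mu nu).re)
    (Z : Matrix I I ℝ)
    (hZnn : ∀ lam mu : I, 0 ≤ Z lam mu)
    (hZ00 : Z i0 i0 = 1)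
    (hcomm : Z.map (Complex.ofReal) * S = S * Z.map (Complex.ofReal)) :
    ∀ lam mu : I, Z lam mu ≤ d lam * d mu := by
  classical
  set v : I → ℝ := fun a => (S a i0).re with hv
  have hmem := hS
  rw [Matrix.mem_unitaryGroup_iff'] at hmem   -- star S * S = 1
  have hmem2 := hS
  rw [Matrix.mem_unitaryGroup_iff] at hmem2   -- S * star S = 1
  have hsym' : ∀ a b, S a b = S b a := by
    intro a b
    conv_lhs => rw [← hsymm]
    rfl
  have hrealc : ∀ a, S a i0 = (v a : ℂ) := by
    intro a
    apply Complex.ext <;> simp [hv, hreal a]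
  -- orthonormality of columns
  have horth : ∀ r r' : I, ∑ n : I, conj (S n r) * S n r' = if r = r' then 1 else 0 := by
    intro r r'
    have h := congrFun (congrFun hmem r) r'
    simpa [Matrix.mul_apply, Matrix.star_apply, Matrix.one_apply] using h
  have horth0 : ∀ r : I, ∑ m : I, S m r * S m i0 = if i0 = r then 1 else 0 := by
    intro r
    rw [← horth i0 r]
    apply Finset.sum_congr rfl
    intro m _
    rw [hrealc m, Complex.conj_ofReal]
    ring
  -- eigenvector identities
  have E1 : ∀ lam mu rho : I,
      ∑ n : I, N lam mu n * S n rho = S lam rho * S mu rho / S i0 rho := by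
    intro lam mu rho
    have key : ∀ n : I, N lam mu n * S n rho
        = ∑ r : I, (S lam r * S mu r / S i0 r) * (conj (S n r) * S n rho) := by
      intro n
      rw [hN, Finset.sum_mul]
      apply Finset.sum_congr rfl
      intro r _
      ring
    calc ∑ n : I, N lam mu n * S n rho
        = ∑ n : I, ∑ r : I, (S lam r * S mu r / S i0 r) * (conj (S n r) * S n rho) :=
          Finset.sum_congr rfl fun n _ => key n
      _ = ∑ r : I, (S lam r * S mu r / S i0 r) * (∑ n : I, conj (S n r) * S n rho) := by
          rw [Finset.sum_comm]
          exact Finset.sum_congr rfl fun r _ => (Finset.mul_sum _ _ _).symm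
      _ = ∑ r : I, (S lam r * S mu r / S i0 r) * (if r = rho then 1 else 0) := by
          exact Finset.sum_congr rfl fun r _ => by rw [horth r rho]
      _ = S lam rho * S mu rho / S i0 rho := by
          simp [mul_ite]
  have E2 : ∀ lam n : I,
      ∑ m : I, N lam m n * S m i0 = S lam i0 * conj (S n i0) / S i0 i0 := by
    intro lam n
    have key : ∀ m : I, N lam m n * S m i0
        = ∑ r : I, (S lam r * conj (S n r) / S i0 r) * (S m r * S m i0) := by
      intro m
      rw [hN, Finset.sum_mul]
      apply Finset.sum_congr rfl
      intro r _
      ring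
    calc ∑ m : I, N lam m n * S m i0
        = ∑ m : I, ∑ r : I, (S lam r * conj (S n r) / S i0 r) * (S m r * S m i0) :=
          Finset.sum_congr rfl fun m _ => key m
      _ = ∑ r : I, (S lam r * conj (S n r) / S i0 r) * (∑ m : I, S m r * S m i0) := by
          rw [Finset.sum_comm]
          exact Finset.sum_congr rfl fun r _ => (Finset.mul_sum _ _ _).symm
      _ = ∑ r : I, (S lam r * conj (S n r) / S i0 r) * (if i0 = r then 1 else 0) := by
          exact Finset.sum_congr rfl fun r _ => by rw [horth0 r]
      _ = S lam i0 * conj (S n i0) / S i0 i0 := by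
          simp [mul_ite]
  have hdpos : ∀ a, 0 < d a := by
    intro a
    rw [hd]
    exact div_pos (hpos a) (hpos i0)
  -- abs of N equals its re
  have hNabs : ∀ lam mu n, ‖N lam mu n‖ = (N lam mu n).re := by
    intro lam mu n
    obtain ⟨h1, h2⟩ := hNnn lam mu n
    have : N lam mu n = ((N lam mu n).re : ℂ) := Complex.ext (by simp) (by simp [h1])
    rw [this, Complex.norm_real, Real.norm_eq_abs, Complex.ofReal_re, abs_of_nonneg h2]
  -- real version of E2
  have E2r : ∀ lam n : I, ∑ m : I, (N lam m n).re * v m = d lam * v n := by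
    intro lam n
    have h := congrArg Complex.re (E2 lam n)
    have hL : (∑ m : I, N lam m n * S m i0).re = ∑ m : I, (N lam m n).re * v m := by
      rw [Complex.re_sum]
      apply Finset.sum_congr rfl
      intro m _
      rw [hrealc m]
      simp [Complex.mul_re]
    have hR : (S lam i0 * conj (S n i0) / S i0 i0).re = d lam * v n := by
      rw [hrealc lam, hrealc n, hrealc i0, Complex.conj_ofReal]
      rw [← Complex.ofReal_mul, ← Complex.ofReal_div, Complex.ofReal_re]
      rw [hd]
      ring
    rw [hL, hR] at h
    exact h
  -- KEY LEMMA: |S lam rho| ≤ d lam * v rho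
  have key : ∀ lam rho : I, ‖S lam rho‖ ≤ d lam * v rho := by
    intro lam rho
    set u : I → ℝ := fun n => ‖S n rho‖ with hu
    have hunn : ∀ n, 0 ≤ u n := fun n => norm_nonneg _
    have hT : 0 < ∑ n : I, v n * u n := by
      obtain ⟨n0, hn0⟩ : ∃ n, S n rho ≠ 0 := by
        by_contra h
        push_neg at h
        have := horth rho rho
        simp [h] at this
      apply Finset.sum_pos' (fun n _ => mul_nonneg (hpos n).le (hunn n))
      exact ⟨n0, Finset.mem_univ _, mul_pos (hpos n0) (norm_pos_iff.mpr hn0)⟩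
    have habsS : ‖S i0 rho‖ = v rho := by
      rw [hsym' i0 rho, hrealc rho, Complex.norm_real, Real.norm_eq_abs, abs_of_pos (hpos rho)]
    have step1 : ∀ mu, (‖S lam rho‖ / v rho) * u mu
        ≤ ∑ n : I, (N lam mu n).re * u n := by
      intro mu
      have e1 := E1 lam mu rho
      have hl : ‖S lam rho * S mu rho / S i0 rho‖
          = (‖S lam rho‖ / v rho) * u mu := by
        rw [norm_div, norm_mul, habsS]
        ring
      calc (‖S lam rho‖ / v rho) * u mu
          = ‖∑ n : I, N lam mu n * S n rho‖ := by rw [e1, hl]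
        _ ≤ ∑ n : I, ‖N lam mu n * S n rho‖ :=
            norm_sum_le _ _
        _ = ∑ n : I, (N lam mu n).re * u n := by
            apply Finset.sum_congr rfl
            intro n _
            rw [norm_mul, hNabs]
    have step2 : (‖S lam rho‖ / v rho) * (∑ m : I, v m * u m)
        ≤ d lam * (∑ n : I, v n * u n) := by
      calc (‖S lam rho‖ / v rho) * (∑ m : I, v m * u m)
          = ∑ m : I, v m * ((‖S lam rho‖ / v rho) * u m) := by
            rw [Finset.mul_sum]
            exact Finset.sum_congr rfl fun m _ => by ring
        _ ≤ ∑ m : I, v m * (∑ n : I, (N lam m n).re * u n) := by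
            apply Finset.sum_le_sum
            intro m _
            exact mul_le_mul_of_nonneg_left (step1 m) (hpos m).le
        _ = ∑ m : I, ∑ n : I, ((N lam m n).re * v m) * u n := by
            apply Finset.sum_congr rfl
            intro m _
            rw [Finset.mul_sum]
            exact Finset.sum_congr rfl fun n _ => by ring
        _ = ∑ n : I, ∑ m : I, ((N lam m n).re * v m) * u n := Finset.sum_comm
        _ = ∑ n : I, (∑ m : I, (N lam m n).re * v m) * u n :=
            Finset.sum_congr rfl fun n _ => (Finset.sum_mul _ _ _).symm
        _ = ∑ n : I, (d lam * v n) * u n := by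
            exact Finset.sum_congr rfl fun n _ => by rw [E2r lam n]
        _ = d lam * (∑ n : I, v n * u n) := by
            rw [Finset.mul_sum]
            exact Finset.sum_congr rfl fun n _ => by ring
    have hfrac : ‖S lam rho‖ / v rho ≤ d lam :=
      le_of_mul_le_mul_right step2 hT
    rwa [div_le_iff₀ (hpos rho)] at hfrac
  -- main part
  intro lam mu
  set Zc := Z.map (Complex.ofReal) with hZcdef
  have h1 : S * Zc * star S = Zc := by
    rw [← hcomm, Matrix.mul_assoc, hmem2, Matrix.mul_one]
  have h2 : star S * Zc * S = Zc := by
    rw [Matrix.mul_assoc, hcomm, ← Matrix.mul_assoc, hmem, Matrix.one_mul]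
  have entry1 : (Z lam mu : ℂ)
      = ∑ b : I, ∑ a : I, S lam a * (Z a b : ℂ) * conj (S mu b) := by
    have h := congrFun (congrFun h1 lam) mu
    calc (Z lam mu : ℂ) = Zc lam mu := rfl
      _ = (S * Zc * star S) lam mu := h.symm
      _ = ∑ b : I, (∑ a : I, S lam a * Zc a b) * conj (S mu b) := by
          rw [Matrix.mul_apply]
          apply Finset.sum_congr rfl
          intro b _
          rw [Matrix.mul_apply, Matrix.star_apply]
          rfl
      _ = ∑ b : I, ∑ a : I, S lam a * (Z a b : ℂ) * conj (S mu b) := by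
          apply Finset.sum_congr rfl
          intro b _
          rw [Finset.sum_mul]
          exact Finset.sum_congr rfl fun a _ => rfl
  have entry2 : ∑ b : I, ∑ a : I, v a * Z a b * v b = 1 := by
    have h := congrFun (congrFun h2 i0) i0
    have hL : ((∑ b : I, ∑ a : I, v a * Z a b * v b : ℝ) : ℂ)
        = (star S * Zc * S) i0 i0 := by
      rw [Matrix.mul_apply]
      push_cast
      apply Finset.sum_congr rfl
      intro b _
      rw [Matrix.mul_apply, Finset.sum_mul]
      apply Finset.sum_congr rfl
      intro a _
      rw [Matrix.star_apply, hrealc a, hrealc b]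
      have hZab : Zc a b = ((Z a b : ℝ) : ℂ) := rfl
      rw [hZab, Complex.star_def, Complex.conj_ofReal]
    have hfin : ((∑ b : I, ∑ a : I, v a * Z a b * v b : ℝ) : ℂ) = ((1 : ℝ) : ℂ) := by
      rw [hL, h]
      show ((Z i0 i0 : ℝ) : ℂ) = _
      rw [hZ00]
    exact_mod_cast hfin
  have habs1 : ∀ a b : I, ‖S lam a * (Z a b : ℂ) * conj (S mu b)‖
      = ‖S lam a‖ * Z a b * ‖S mu b‖ := by
    intro a b
    rw [norm_mul, norm_mul, Complex.norm_conj, Complex.norm_real, Real.norm_eq_abs, abs_of_nonneg (hZnn a b)]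
  calc Z lam mu ≤ |Z lam mu| := le_abs_self _
    _ = ‖(Z lam mu : ℂ)‖ := by rw [Complex.norm_real, Real.norm_eq_abs]
    _ = ‖∑ b : I, ∑ a : I, S lam a * (Z a b : ℂ) * conj (S mu b)‖ := by
        rw [← entry1]
    _ ≤ ∑ b : I, ‖∑ a : I, S lam a * (Z a b : ℂ) * conj (S mu b)‖ :=
        norm_sum_le _ _
    _ ≤ ∑ b : I, ∑ a : I, ‖S lam a * (Z a b : ℂ) * conj (S mu b)‖ :=
        Finset.sum_le_sum fun b _ => norm_sum_le _ _
    _ = ∑ b : I, ∑ a : I, ‖S lam a‖ * Z a b * ‖S mu b‖ :=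
        Finset.sum_congr rfl fun b _ => Finset.sum_congr rfl fun a _ => habs1 a b
    _ ≤ ∑ b : I, ∑ a : I, (d lam * v a) * Z a b * (d mu * v b) := by
        apply Finset.sum_le_sum
        intro b _
        apply Finset.sum_le_sum
        intro a _
        have hk1 := key lam a
        have hk2 := key mu b
        have hnn1 : 0 ≤ d lam * v a := mul_nonneg (hdpos lam).le (hpos a).le
        have hnn2 : 0 ≤ (d lam * v a) * Z a b := mul_nonneg hnn1 (hZnn a b)
        exact mul_le_mul (mul_le_mul hk1 le_rfl (hZnn a b) hnn1) hk2
          (norm_nonneg _) hnn2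
    _ = d lam * d mu * ∑ b : I, ∑ a : I, v a * Z a b * v b := by
        rw [Finset.mul_sum]
        apply Finset.sum_congr rfl
        intro b _
        rw [Finset.mul_sum]
        exact Finset.sum_congr rfl fun a _ => by ring
    _ = d lam * d mu := by rw [entry2, mul_one]
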